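/- Let u and v be nonempty words over a finite alphabet Σ and let k, ℓ ∈ ℕ be such that k ≥ |u|·|v|, ℓ ≥ |u|·|v|, and u^k is an infix of v^ℓ. Then there exists a nonempty word w with |w| ≤ min(|u|, |v|) and a number p ∈ ℕ such that u^k is an infix of v^ℓ and v^ℓ is an infix of w^p. -/

import Mathlib

/-- The `p`-fold concatenation of the word `x`. -/
def wpow {A : Type*} (x : List A) (p : ℕ) : List A := (List.replicate p x).flatten

theorem wpow_length {A : Type*} (x : List A) (p : ℕ) : (wpow x p).length = p * x.length := by
  simp [wpow]

theorem wpow_succ {A : Type*} (x : List A) (p : ℕ) : wpow x (p+1) = x ++ wpow x p := by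
  simp [wpow, List.replicate_succ]

theorem wpow_add {A : Type*} (x : List A) (a b : ℕ) : wpow x (a+b) = wpow x a ++ wpow x b := by
  induction a with
  | zero => simp [wpow]
  | succ a ih => rw [Nat.succ_add, wpow_succ, wpow_succ, ih, List.append_assoc]

theorem wpow_wpow {A : Type*} (x : List A) (q l : ℕ) : wpow (wpow x q) l = wpow x (l*q) := by
  induction l with
  | zero => simp [wpow]
  | succ l ih => rw [wpow_succ, ih, Nat.succ_mul, Nat.add_comm, wpow_add]

theorem wpow_getElem {A : Type*} (x : List A) (hx : x ≠ []) (p j : ℕ) (h : j < p * x.length) :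
    (wpow x p)[j]'(by rw [wpow_length]; exact h) =
      x[j % x.length]'(Nat.mod_lt _ (List.length_pos_iff.mpr hx)) := by
  induction p generalizing j with
  | zero => omega
  | succ p ih =>
    rw [List.getElem_of_eq (wpow_succ x p)]
    rcases lt_or_ge j x.length with hj | hj
    · rw [List.getElem_append_left hj]
      congr 1
      exact (Nat.mod_eq_of_lt hj).symm
    · have h2 : j - x.length < p * x.length := by
        have h3 : (p+1) * x.length = p * x.length + x.length := Nat.succ_mul p x.length
        omega
      rw [List.getElem_append_right hj]
      have := ih (j - x.length) h2
      rw [this]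
      congr 1
      rw [Nat.mod_eq_sub_mod hj]

theorem bez (m n : ℕ) (hm : 0 < m) (hmn : m < n) :
    ∃ a b : ℕ, 0 < a ∧ a ≤ n ∧ a * m = Nat.gcd m n + b * n := by
  set d := Nat.gcd m n with hd
  have hd0 : 0 < d := Nat.gcd_pos_of_pos_left n hm
  have hdm : d ≤ m := Nat.le_of_dvd hm (Nat.gcd_dvd_left m n)
  have hn : 0 < n := lt_trans hm hmn
  have hbez : (d : ℤ) = m * Nat.gcdA m n + n * Nat.gcdB m n := Nat.gcd_eq_gcd_ab m n
  set A : ℤ := Nat.gcdA m n % n with hA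
  have hA0 : 0 ≤ A := Int.emod_nonneg _ (by exact_mod_cast hn.ne')
  have hAn : A < n := Int.emod_lt_of_pos _ (by exact_mod_cast hn)
  have hmodZ : (A * m) % n = (d : ℤ) % n := by
    have h1 : (A * m) % n = (Nat.gcdA m n * m) % n := by
      rw [hA, Int.mul_emod, Int.emod_emod_of_dvd _ dvd_rfl, ← Int.mul_emod]
    rw [h1]
    have h2 : (Nat.gcdA m n * m : ℤ) = d - n * Nat.gcdB m n := by rw [hbez]; ring
    rw [h2, Int.sub_emod, Int.mul_emod_right]
    simp [Int.emod_emod_of_dvd]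
  have hApos : 0 < A := by
    rcases lt_or_eq_of_le hA0 with h | h
    · exact h
    · exfalso
      rw [← h] at hmodZ
      simp at hmodZ
      rw [Int.emod_eq_of_lt (by exact_mod_cast hd0.le) (by exact_mod_cast hmn.trans_le' hdm)] at hmodZ
      exact absurd hmodZ.symm (by exact_mod_cast hd0.ne')
  set a : ℕ := A.toNat with ha
  have haA : (a : ℤ) = A := Int.toNat_of_nonneg hA0
  have hmodN : (a * m) % n = d % n := by
    have : ((a * m : ℕ) : ℤ) % (n : ℤ) = ((d : ℕ) : ℤ) % (n : ℤ) := by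
      push_cast [haA]
      exact hmodZ
    exact_mod_cast this
  have hdn' : d % n = d := Nat.mod_eq_of_lt (lt_of_le_of_lt hdm hmn)
  have ham : d ≤ a * m := by
    calc d ≤ m := hdm
    _ ≤ a * m := Nat.le_mul_of_pos_left m (by exact_mod_cast haA ▸ hApos)
  refine ⟨a, (a * m) / n, by exact_mod_cast haA ▸ hApos, by exact_mod_cast haA ▸ hAn.le, ?_⟩
  have h1 := Nat.div_add_mod (a * m) n
  have h2 : (a * m / n) * n = n * (a * m / n) := Nat.mul_comm _ _
  omega

theorem getElem_idx_congr {A : Type*} (l : List A) {a b : ℕ} (h : a = b) (ha : a < l.length) :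
    l[a]'ha = l[b]'(h ▸ ha) := by subst h; rfl


/-- If `u, v` are nonempty, `k, ℓ ≥ |u|·|v|`, and `u^k` is an infix
of `v^ℓ`, then there is a nonempty word `w` with `|w| ≤ min(|u|,|v|)` and `p ∈ ℕ`
such that `u^k` is an infix of `v^ℓ` and `v^ℓ` is an infix of `w^p`. -/
theorem powers_infix_common_period
    {A : Type*} [Fintype A] (u v : List A) (hu : u ≠ []) (hv : v ≠ [])
    (k l : ℕ) (hk : u.length * v.length ≤ k) (hl : u.length * v.length ≤ l)
    (hinf : wpow u k <:+: wpow v l) :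
    ∃ w : List A, w ≠ [] ∧ w.length ≤ min u.length v.length ∧
      ∃ p : ℕ, wpow u k <:+: wpow v l ∧ wpow v l <:+: wpow w p := by
  rcases le_or_gt v.length u.length with hle | hlt
  · exact ⟨v, hv, le_min hle le_rfl, l, hinf, List.infix_refl _⟩
  set m := u.length with hmdef
  set n := v.length with hndef
  have hm : 0 < m := List.length_pos_iff.mpr hu
  have hn : 0 < n := List.length_pos_iff.mpr hv
  set d := Nat.gcd m n with hddef
  have hd0 : 0 < d := Nat.gcd_pos_of_pos_left n hm
  have hdm : d ≤ m := Nat.le_of_dvd hm (Nat.gcd_dvd_left m n)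
  have hdn : d ∣ n := Nat.gcd_dvd_right m n
  obtain ⟨s, t, hst⟩ := hinf
  set i := s.length with hidef
  have hlen : i + k * m + t.length = l * n := by
    have h1 := congrArg List.length hst
    simp only [List.length_append, wpow_length, ← hmdef, ← hndef, ← hidef] at h1
    omega
  have hnkm : n ≤ k * m := by nlinarith
  set g : ℕ → A := fun x => v.get ⟨x % n, Nat.mod_lt x hn⟩ with hgdef
  have gcongr : ∀ x y : ℕ, x % n = y % n → g x = g y := by
    intro x y h
    show v.get _ = v.get _
    congr 1
    exact Fin.ext h
  have hval : ∀ (x : ℕ) (h : x < n), g x = v[x]'h := by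
    intro x h
    show v.get _ = _
    rw [List.get_eq_getElem]
    exact getElem_idx_congr v (Nat.mod_eq_of_lt h) _
  have F0 : ∀ (x : ℕ) (h : x < l * n), g x = (wpow v l)[x]'(by rw [wpow_length]; exact h) := by
    intro x h
    rw [wpow_getElem v hv l x h]
    rfl
  have F1 : ∀ (j : ℕ) (hj : j < k * m), g (i + j) = u[j % m]'(Nat.mod_lt j hm) := by
    intro j hj
    have hx : i + j < l * n := by omega
    rw [F0 _ hx, List.getElem_of_eq hst.symm]
    have h1 : i + j < (s ++ wpow u k).length := by
      simp only [List.length_append, wpow_length, ← hmdef, ← hidef]; omega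
    rw [List.getElem_append_left h1]
    have h2 : i ≤ i + j := Nat.le_add_right i j
    rw [List.getElem_append_right (show s.length ≤ i + j from h2)]
    have h3 : i + j - s.length = j := by rw [← hidef]; omega
    rw [getElem_idx_congr _ h3]
    exact wpow_getElem u hu k j hj
  have pick : ∀ x : ℕ, ∃ j, j < n ∧ (i + j) % n = x % n := by
    intro x
    refine ⟨(x % n + i * (n - 1)) % n, Nat.mod_lt _ hn, ?_⟩
    have h5 : i + i * (n - 1) = i * n := by
      have h6 : i * n = i * (n - 1) + i := by
        conv_lhs => rw [← Nat.succ_pred_eq_of_pos hn]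
        rw [Nat.mul_succ]
        rfl
      omega
    calc (i + (x % n + i * (n - 1)) % n) % n
        = (i + (x % n + i * (n - 1))) % n := Nat.add_mod_mod _ _ _
      _ = (x % n + i * n) % n := by rw [show i + (x % n + i * (n - 1)) = x % n + (i + i * (n-1)) by ring, h5]
      _ = x % n % n := Nat.add_mul_mod_self_right _ _ _
      _ = x % n := Nat.mod_mod_of_dvd _ dvd_rfl
  have claim : ∀ x : ℕ, g (x + d) = g x := by
    rcases eq_or_lt_of_le (show 1 ≤ m from hm) with hm1 | hm2
    · -- m = 1 : g is u[0] everywhere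
      have hd1 : d = 1 := by rw [hddef, ← hm1]; exact Nat.gcd_one_left n
      have gu : ∀ x : ℕ, g x = u[0]'hm := by
        intro x
        obtain ⟨j, hj, hmod⟩ := pick x
        rw [gcongr x (i + j) hmod.symm, F1 j (lt_of_lt_of_le hj hnkm)]
        exact getElem_idx_congr u (by rw [← hm1]; exact Nat.mod_one j) _
      intro x; rw [gu, gu]
    · -- 2 ≤ m
      have per_m : ∀ x : ℕ, g (x + m) = g x := by
        intro x
        obtain ⟨j, hj, hmod⟩ := pick x
        have hjw : j < k * m := lt_of_lt_of_le hj hnkm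
        have hjmw : j + m < k * m := by
          have t1 : m * n * m ≤ k * m := Nat.mul_le_mul_right m hk
          have t2 : 2 * n ≤ m * n := Nat.mul_le_mul_right n hm2
          have t3 : m * n ≤ m * n * m := Nat.le_mul_of_pos_right _ hm
          omega
        have hmod2 : (i + j + m) % n = (x + m) % n := by
          have := Nat.ModEq.add_right m (show Nat.ModEq n (i+j) x from hmod)
          exact this
        have e1 : g x = u[j % m]'(Nat.mod_lt j hm) := (gcongr x (i + j) hmod.symm).trans (F1 j hjw)
        have e2 : g (x + m) = u[(j + m) % m]'(Nat.mod_lt _ hm) := by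
          rw [gcongr (x + m) (i + j + m) hmod2.symm]
          have := F1 (j + m) hjmw
          rw [← Nat.add_assoc] at this
          exact this
        rw [e1, e2]
        exact getElem_idx_congr u (Nat.add_mod_right j m) _
      have per_mt : ∀ (c x : ℕ), g (x + c * m) = g x := by
        intro c
        induction c with
        | zero => simp
        | succ c ih =>
          intro x
          have : x + (c + 1) * m = (x + c * m) + m := by ring
          rw [this, per_m, ih]
      have per_nt : ∀ (c x : ℕ), g (x + c * n) = g x :=
        fun c x => gcongr _ _ (Nat.add_mul_mod_self_right x c n)
      obtain ⟨a, b, ha0, han, hab⟩ := bez m n hm hlt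
      intro x
      calc g (x + d) = g (x + d + b * n) := (per_nt b (x + d)).symm
        _ = g (x + a * m) := congrArg g (by rw [Nat.add_assoc, ← hab])
        _ = g x := per_mt a x
  have claim2 : ∀ x : ℕ, g x = g (x % d) := by
    have per_dt : ∀ (c y : ℕ), g (y + d * c) = g y := by
      intro c
      induction c with
      | zero => simp
      | succ c ih =>
        intro y
        have : y + d * (c + 1) = (y + d * c) + d := by ring
        rw [this, claim, ih]
    intro x
    conv_lhs => rw [← Nat.mod_add_div x d]
    exact per_dt (x / d) (x % d)
  set w := v.take d with hwdef
  have hwlen : w.length = d := by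
    rw [hwdef, List.length_take]
    exact min_eq_left (le_of_lt (lt_of_le_of_lt hdm hlt))
  have hwne : w ≠ [] := by
    intro h
    rw [h] at hwlen
    simp at hwlen
    omega
  have hvw : v = wpow w (n / d) := by
    apply List.ext_getElem
    · rw [wpow_length, hwlen, Nat.div_mul_cancel hdn]
    · intro j h1 h2
      have h1' : j < n := h1
      have hj : j < (n / d) * w.length := by
        rw [hwlen, Nat.div_mul_cancel hdn]; exact h1'
      rw [wpow_getElem w hwne (n / d) j hj]
      simp only [hwlen, hwdef, List.getElem_take]
      simp only [show (List.take d v).length = d from hwlen]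
      have hjdn : j % d < n := lt_of_lt_of_le (Nat.mod_lt j hd0) (le_of_lt (lt_of_le_of_lt hdm hlt))
      rw [← hval j h1', ← hval (j % d) hjdn]
      exact claim2 j
  refine ⟨w, hwne, by rw [hwlen]; exact le_min hdm (Nat.le_of_dvd hn hdn), l * (n / d), ⟨s, t, hst⟩, ?_⟩
  have heq : wpow v l = wpow w (l * (n / d)) := by
    conv_lhs => rw [hvw]
    exact wpow_wpow w (n / d) l
  rw [heq]
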